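/- Let n, r ≥ 1 with 2 ≤ d_1 ≤ ... ≤ d_r, d_1 + ... + d_r > n, and let p and α_p be as above. Then for all nonnegative reals u_1, ..., u_r, n + ∑_{j=1}^r u_j ≥ α_p · min_{1 ≤ j ≤ r}(d_j + u_j). -/

import Mathlib

open Finset

/-- inequality (ineq2): if `∑ d j > n`, then for all `u j ≥ 0`,
`n + ∑ u j ≥ α_p ⬝ min_j (d j + u j)`. -/
theorem stmt_12 (n r : ℕ) (hn : 0 < n) (hr : 0 < r)
    (d : Fin r → ℕ) (hd : ∀ i, 2 ≤ d i) (hmono : Monotone d)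
    (hsum : ∑ i, d i > n)
    (p : Fin r)
    (hp1 : ∀ i < p, (∑ j ∈ Iic i, d j) ≤ n)
    (hp2 : (∑ j ∈ Iic p, d j) > n)
    (αp : ℝ)
    (hαp : αp = ((p : ℕ) + 1 : ℝ) + ((n : ℝ) - ∑ j ∈ Iic p, (d j : ℝ)) / (d p : ℝ))
    (u : Fin r → ℝ) (hu : ∀ j, 0 ≤ u j) :
    (n : ℝ) + ∑ j, u j ≥
      αp * Finset.univ.inf'
        (Finset.univ_nonempty_iff.mpr ⟨⟨0, hr⟩⟩) (fun j : Fin r => (d j : ℝ) + u j) := by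
  set m := Finset.univ.inf'
        (Finset.univ_nonempty_iff.mpr ⟨⟨0, hr⟩⟩) (fun j : Fin r => (d j : ℝ) + u j) with hmdef
  have hm_le : ∀ j : Fin r, m ≤ (d j : ℝ) + u j := fun j =>
    Finset.inf'_le _ (Finset.mem_univ j)
  have hdp : (0:ℝ) < (d p : ℝ) := by
    have := hd p; exact_mod_cast Nat.lt_of_lt_of_le Nat.zero_lt_two this
  -- sum over Iio p is ≤ n
  have hIio : (∑ j ∈ Iio p, d j) ≤ n := by
    rcases Nat.eq_zero_or_pos p.val with h0 | h0
    · have : Finset.Iio p = ∅ := by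
        rw [Finset.eq_empty_iff_forall_notMem]
        intro j hj
        rw [Finset.mem_Iio, Fin.lt_def] at hj
        omega
      rw [this]; simp
    · set i : Fin r := ⟨p.val - 1, by omega⟩ with hi
      have hip : i < p := by rw [Fin.lt_def]; simp [hi]; omega
      have : Finset.Iio p = Finset.Iic i := by
        ext j
        simp only [Finset.mem_Iio, Finset.mem_Iic, Fin.lt_def, Fin.le_def, hi]
        omega
      rw [this]; exact hp1 i hip
  have hnot : p ∉ Finset.Iio p := by simp
  have hsplit : (∑ j ∈ Iic p, d j) = (∑ j ∈ Iio p, d j) + d p := by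
    rw [← Finset.Iio_insert, Finset.sum_insert hnot]; ring
  have hsplitR : (∑ j ∈ Iic p, (d j : ℝ)) = (∑ j ∈ Iio p, (d j : ℝ)) + (d p : ℝ) := by
    rw [← Finset.Iio_insert, Finset.sum_insert hnot]; ring
  have hsplitu : (∑ j ∈ Iic p, u j) = (∑ j ∈ Iio p, u j) + u p := by
    rw [← Finset.Iio_insert, Finset.sum_insert hnot]; ring
  set β : ℝ := ((n : ℝ) - ∑ j ∈ Iio p, (d j : ℝ)) / (d p : ℝ) with hβdef
  have hIioR : (∑ j ∈ Iio p, (d j : ℝ)) ≤ (n : ℝ) := by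
    have : ((∑ j ∈ Iio p, d j : ℕ) : ℝ) ≤ (n : ℝ) := by exact_mod_cast hIio
    simpa using this
  have hβ0 : 0 ≤ β := by
    apply div_nonneg _ hdp.le; linarith
  have hβ1 : β ≤ 1 := by
    rw [div_le_one hdp]
    have h2 : (n : ℝ) < ∑ j ∈ Iic p, (d j : ℝ) := by
      have : ((n:ℕ):ℝ) < ((∑ j ∈ Iic p, d j : ℕ) : ℝ) := by exact_mod_cast hp2
      simpa using this
    rw [hsplitR] at h2; linarith
  have hαβ : αp = (p.val : ℝ) + β := by
    rw [hαp, hβdef, hsplitR]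
    field_simp
    ring
  have hcard : (Finset.Iio p).card = p.val := by simp
  have h1 : (p.val : ℝ) * m ≤ ∑ j ∈ Iio p, ((d j : ℝ) + u j) := by
    calc (p.val : ℝ) * m = ∑ _j ∈ Iio p, m := by
          rw [Finset.sum_const, hcard, nsmul_eq_mul]
      _ ≤ _ := Finset.sum_le_sum fun j _ => hm_le j
  have h2 : β * m ≤ β * ((d p : ℝ) + u p) := mul_le_mul_of_nonneg_left (hm_le p) hβ0
  have h3 : β * ((d p : ℝ) + u p) ≤ β * (d p : ℝ) + u p := by nlinarith [hu p]
  have hβdp : β * (d p : ℝ) = (n : ℝ) - ∑ j ∈ Iio p, (d j : ℝ) := by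
    rw [hβdef]; exact div_mul_cancel₀ _ hdp.ne'
  have hsum_split : ∑ j ∈ Iio p, ((d j : ℝ) + u j)
      = (∑ j ∈ Iio p, (d j : ℝ)) + ∑ j ∈ Iio p, u j := Finset.sum_add_distrib
  have husub : (∑ j ∈ Iic p, u j) ≤ ∑ j, u j :=
    Finset.sum_le_sum_of_subset_of_nonneg (Finset.subset_univ _) (fun j _ _ => hu j)
  rw [ge_iff_le, hαβ, add_mul]
  rw [hsplitu] at husub
  linarith
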